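/- arXiv:1007.0998 — 3 statements merged into one kernel-verified Lean document; each statement's English description precedes it below -/
import Mathlib

section
/- Let (G, G', ι, P, r) be a b-bounded refinement of a locally finite simple graph G, let Γ be a nonempty family of paths in G all of whose consecutive vertices are adjacent, and let Γ' be a nonempty family of paths in G'. Suppose that for every γ ∈ Γ the refined path γ_r (obtained by replacing each edge v w of γ by the path P(v w)) belongs to Γ'. Then EL(Γ') ≤ 2(b+1)²·EL(Γ). -/
open scoped ENNReal NNReal

/-- A (vertex) path in a graph: consecutive vertices are adjacent or equal. -/
def IsPath {V : Type*} (G : SimpleGraph V) (γ : List V) : Prop :=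
  γ.Chain' (fun a b => G.Adj a b ∨ a = b)

/-- The area of a metric `m : V → ℝ≥0`, valued in `ℝ≥0∞`. -/
noncomputable def gArea {V : Type*} (m : V → ℝ≥0) : ℝ≥0∞ :=
  ∑' v, (m v : ℝ≥0∞) ^ 2

/-- A metric is admissible if its area is finite and nonzero. -/
def Admissible {V : Type*} (m : V → ℝ≥0) : Prop :=
  0 < gArea m ∧ gArea m < ⊤

/-- The `m`-length of a path, summing the weights of its vertices with multiplicity. -/
noncomputable def pLen {V : Type*} (m : V → ℝ≥0) (γ : List V) : ℝ≥0∞ :=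
  (γ.map fun v => (m v : ℝ≥0∞)).sum

/-- The `m`-length of a path family: the infimum of the lengths of its members. -/
noncomputable def famLen {V : Type*} (m : V → ℝ≥0) (Γ : Set (List V)) : ℝ≥0∞ :=
  ⨅ γ ∈ Γ, pLen m γ

/-- The extremal length of a path family. -/
noncomputable def extremalLength {V : Type*} (Γ : Set (List V)) : ℝ≥0∞ :=
  ⨆ (m : V → ℝ≥0) (_ : Admissible m), famLen m Γ ^ 2 / gArea m

/-- A refinement of a simple graph `G` by a simple graph `G'`: an injection `ι` of the
vertices, and for each edge `(a,b)` of `G` a finite path `ι a :: P a b ++ [ι b]` in `G'`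
whose interior vertex list `P a b` (the vertices *attached* to the edge) is disjoint from
`ι(V)`, with attached sets of distinct edges pairwise disjoint. -/
structure Refinement {V V' : Type*} (G : SimpleGraph V) (G' : SimpleGraph V') where
  ι : V → V'
  inj : Function.Injective ι
  P : V → V → List V'
  path_adj : ∀ a b, G.Adj a b → List.Chain' G'.Adj (ι a :: P a b ++ [ι b])
  path_nodup : ∀ a b, G.Adj a b → (ι a :: P a b ++ [ι b]).Nodup
  symm : ∀ a b, G.Adj a b → P b a = (P a b).reverse
  disj_range : ∀ a b, G.Adj a b → ∀ z ∈ P a b, z ∉ Set.range ι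
  disj_edges : ∀ a b c d, G.Adj a b → G.Adj c d → s(a, b) ≠ s(c, d) →
    ∀ z ∈ P a b, z ∉ P c d

/-- A refinement is `b`-bounded if every edge has at most `b` attached vertices. -/
def Refinement.IsBBounded {V V' : Type*} {G : SimpleGraph V} {G' : SimpleGraph V'}
    (R : Refinement G G') (b : ℕ) : Prop :=
  ∀ a c, G.Adj a c → (R.P a c).length ≤ b

/-- The refined path `γ_r` of a path `γ`, obtained by replacing each edge `v w` of `γ`
by the path `ι v :: P v w ++ [ι w]` in `G'`. -/
def Refinement.refinePath {V V' : Type*} {G : SimpleGraph V} {G' : SimpleGraph V'}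
    (R : Refinement G G') : List V → List V'
  | [] => []
  | [v] => [R.ι v]
  | v :: w :: rest => R.ι v :: (R.P v w ++ R.refinePath (w :: rest))


private lemma nn_two_mul_sum_le (x : ℝ≥0) (l : List ℝ≥0) :
    2 * x * l.sum ≤ (l.length : ℝ≥0) * x ^ 2 + (l.map (· ^ 2)).sum := by
  induction l with
  | nil => simp
  | cons y l ih =>
    simp only [List.sum_cons, List.map_cons, List.length_cons, Nat.cast_succ]
    calc 2 * x * (y + l.sum) = 2 * x * y + 2 * x * l.sum := by ring
      _ ≤ (x ^ 2 + y ^ 2) + ((l.length : ℝ≥0) * x ^ 2 + (l.map (· ^ 2)).sum) :=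
          add_le_add (two_mul_le_add_sq x y) ih
      _ = ((l.length : ℝ≥0) + 1) * x ^ 2 + (y ^ 2 + (l.map (· ^ 2)).sum) := by ring

private lemma nn_list_cauchy (l : List ℝ≥0) :
    l.sum ^ 2 ≤ (l.length : ℝ≥0) * (l.map (· ^ 2)).sum := by
  induction l with
  | nil => simp
  | cons x l ih =>
    simp only [List.sum_cons, List.map_cons, List.length_cons, Nat.cast_succ]
    calc (x + l.sum) ^ 2 = x ^ 2 + (2 * x * l.sum + l.sum ^ 2) := by ring
      _ ≤ x ^ 2 + (((l.length : ℝ≥0) * x ^ 2 + (l.map (· ^ 2)).sum)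
            + (l.length : ℝ≥0) * (l.map (· ^ 2)).sum) :=
          add_le_add_right (add_le_add (nn_two_mul_sum_le x l) ih) _
      _ = ((l.length : ℝ≥0) + 1) * (x ^ 2 + (l.map (· ^ 2)).sum) := by ring

private lemma coe_list_sum' (l : List ℝ≥0) :
    ((l.sum : ℝ≥0) : ℝ≥0∞) = (l.map ENNReal.ofNNReal).sum := by
  induction l with
  | nil => simp
  | cons x l ih => simp [ih]

/-- First half of the main theorem: if refined paths of members of `Γ` belong to `Γ'`,
then `EL(Γ') ≤ 2(b+1)²·EL(Γ)`. -/
theorem stmt_6 {V V' : Type*} (G : SimpleGraph V) (G' : SimpleGraph V')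
    (hlf : ∀ v : V, (G.neighborSet v).Finite)
    (R : Refinement G G') (b : ℕ) (hb : R.IsBBounded b)
    (Γ : Set (List V)) (Γ' : Set (List V'))
    (hΓne : Γ.Nonempty) (hΓ'ne : Γ'.Nonempty)
    (hΓ : ∀ γ ∈ Γ, γ.Chain' G.Adj) (hΓ' : ∀ γ ∈ Γ', IsPath G' γ)
    (href : ∀ γ ∈ Γ, R.refinePath γ ∈ Γ') :
    extremalLength Γ' ≤ ((2 * (b + 1) ^ 2 : ℕ) : ℝ≥0∞) * extremalLength Γ := by
  classical
  simp only [extremalLength]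
  refine iSup₂_le fun m' hm' => ?_
  set g : V' → ℝ≥0∞ := fun z => (m' z : ℝ≥0∞) ^ 2 with hg
  set t : V → ℝ≥0 :=
    fun v => ∑ w ∈ (hlf v).toFinset, ((R.P v w).map fun z => m' z ^ 2).sum with ht
  set m : V → ℝ≥0 := fun v => m' (R.ι v) + NNReal.sqrt ((b : ℝ≥0) * t v) with hm
  have hnd : ∀ (a c : V), G.Adj a c → (R.P a c).Nodup :=
    fun a c h => ((R.path_nodup a c h).of_cons).of_append_left
  -- key pointwise bound via Cauchy–Schwarz
  have hkey : ∀ v w, G.Adj v w →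
      ((R.P v w).map m').sum ≤ NNReal.sqrt ((b : ℝ≥0) * t v) := by
    intro v w hvw
    rw [NNReal.le_sqrt_iff_sq_le]
    calc ((R.P v w).map m').sum ^ 2
        ≤ (((R.P v w).map m').length : ℝ≥0) * (((R.P v w).map m').map (· ^ 2)).sum :=
          nn_list_cauchy _
      _ ≤ (b : ℝ≥0) * t v := by
          rw [List.length_map, List.map_map]
          refine mul_le_mul' (by exact_mod_cast hb v w hvw) ?_
          simp only [ht]
          exact Finset.single_le_sum
            (f := fun w => ((R.P v w).map fun z => m' z ^ 2).sum)
            (fun _ _ => zero_le) ((hlf v).mem_toFinset.mpr hvw)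
  -- length comparison along refined paths
  have hlen : ∀ γ : List V, γ.Chain' G.Adj → pLen m' (R.refinePath γ) ≤ pLen m γ := by
    intro γ
    induction γ with
    | nil => intro _; simp [Refinement.refinePath, pLen]
    | cons v rest ih =>
      intro hch
      cases rest with
      | nil =>
        simp only [Refinement.refinePath, pLen, List.map_cons, List.map_nil,
          List.sum_cons, List.sum_nil]
        refine add_le_add_left (ENNReal.coe_le_coe.mpr ?_) _
        simp only [hm]
        exact le_self_add
      | cons w rest' =>
        have hadj : G.Adj v w := (List.isChain_cons_cons.mp hch).1
        have hch' : (w :: rest').Chain' G.Adj := (List.isChain_cons_cons.mp hch).2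
        have ihh := ih hch'
        have hkey' : ((R.P v w).map fun z => ((m' z : ℝ≥0∞))).sum
            ≤ (NNReal.sqrt ((b : ℝ≥0) * t v) : ℝ≥0∞) := by
          calc ((R.P v w).map fun z => ((m' z : ℝ≥0∞))).sum
              = ((((R.P v w).map m').sum : ℝ≥0) : ℝ≥0∞) := by
                rw [coe_list_sum', List.map_map]; rfl
            _ ≤ _ := ENNReal.coe_le_coe.mpr (hkey v w hadj)
        have expand1 : pLen m' (R.refinePath (v :: w :: rest'))
            = (m' (R.ι v) : ℝ≥0∞) + (((R.P v w).map fun z => ((m' z : ℝ≥0∞))).sum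
              + pLen m' (R.refinePath (w :: rest'))) := by
          simp [Refinement.refinePath, pLen, List.map_append]
        have expand2 : pLen m (v :: w :: rest') = (m v : ℝ≥0∞) + pLen m (w :: rest') := by
          simp [pLen]
        rw [expand1, expand2]
        calc (m' (R.ι v) : ℝ≥0∞) + (((R.P v w).map fun z => ((m' z : ℝ≥0∞))).sum
              + pLen m' (R.refinePath (w :: rest')))
            ≤ (m' (R.ι v) : ℝ≥0∞) + ((NNReal.sqrt ((b : ℝ≥0) * t v) : ℝ≥0∞)
              + pLen m (w :: rest')) := add_le_add_right (add_le_add hkey' ihh) _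
          _ = (m v : ℝ≥0∞) + pLen m (w :: rest') := by
              simp only [hm]; push_cast; ring
  -- double counting: total attached weight is at most twice the area
  have hT : ∑' v, ((t v : ℝ≥0) : ℝ≥0∞) ≤ 2 * gArea m' := by
    have hgA : ∑' z, g z = gArea m' := rfl
    rw [ENNReal.tsum_eq_iSup_sum]
    refine iSup_le fun F => ?_
    set T : Finset ((_ : V) × V) := F.sigma fun v => (hlf v).toFinset with hTdef
    set Z : Finset V' := T.biUnion (fun p => (R.P p.1 p.2).toFinset) with hZ
    have hadjT : ∀ p ∈ T, G.Adj p.1 p.2 := fun p hp =>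
      (hlf p.1).mem_toFinset.mp (Finset.mem_sigma.mp hp).2
    have htv : ∀ v, ((t v : ℝ≥0) : ℝ≥0∞)
        = ∑ w ∈ (hlf v).toFinset, ∑ z ∈ (R.P v w).toFinset, g z := by
      intro v
      simp only [ht]
      rw [ENNReal.coe_finset_sum]
      refine Finset.sum_congr rfl fun w hw => ?_
      have hadj := (hlf v).mem_toFinset.mp hw
      rw [List.sum_toFinset g (hnd v w hadj), coe_list_sum', List.map_map]
      refine congrArg List.sum (List.map_congr_left fun z _ => ?_)
      simp [hg]
    calc ∑ v ∈ F, ((t v : ℝ≥0) : ℝ≥0∞)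
        = ∑ p ∈ T, ∑ z ∈ (R.P p.1 p.2).toFinset, g z := by
          simp_rw [htv]
          exact Finset.sum_sigma' F _ _
      _ = ∑ p ∈ T, ∑ z ∈ Z, (if z ∈ (R.P p.1 p.2).toFinset then g z else 0) := by
          refine Finset.sum_congr rfl fun p hp => ?_
          rw [Finset.sum_ite_mem,
            Finset.inter_eq_right.mpr (Finset.subset_biUnion_of_mem _ hp)]
      _ = ∑ z ∈ Z, ∑ p ∈ T, (if z ∈ (R.P p.1 p.2).toFinset then g z else 0) :=
          Finset.sum_comm
      _ ≤ ∑ z ∈ Z, 2 * g z := by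
          refine Finset.sum_le_sum fun z _ => ?_
          rw [← Finset.sum_filter, Finset.sum_const]
          by_cases hne : (T.filter fun p => z ∈ (R.P p.1 p.2).toFinset).Nonempty
          · obtain ⟨p₀, hp₀⟩ := hne
            have hp₀T := (Finset.mem_filter.mp hp₀).1
            have hzp₀ : z ∈ R.P p₀.1 p₀.2 :=
              List.mem_toFinset.mp (Finset.mem_filter.mp hp₀).2
            have hadj₀ := hadjT p₀ hp₀T
            have hsub : (T.filter fun p => z ∈ (R.P p.1 p.2).toFinset)
                ⊆ {p₀, ⟨p₀.2, p₀.1⟩} := by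
              intro p hp
              have hpT := (Finset.mem_filter.mp hp).1
              have hzp : z ∈ R.P p.1 p.2 :=
                List.mem_toFinset.mp (Finset.mem_filter.mp hp).2
              have hadjp := hadjT p hpT
              have heq : s(p.1, p.2) = s(p₀.1, p₀.2) := by
                by_contra hne'
                exact R.disj_edges _ _ _ _ hadjp hadj₀ hne' z hzp hzp₀
              simp only [Finset.mem_insert, Finset.mem_singleton]
              rcases Sym2.eq_iff.mp heq with ⟨h1, h2⟩ | ⟨h1, h2⟩
              · left
                obtain ⟨pa, pb⟩ := p; obtain ⟨qa, qb⟩ := p₀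
                simp_all
              · right
                obtain ⟨pa, pb⟩ := p; obtain ⟨qa, qb⟩ := p₀
                simp_all
            have hcard : (T.filter fun p => z ∈ (R.P p.1 p.2).toFinset).card ≤ 2 := by
              refine le_trans (Finset.card_le_card hsub) ?_
              refine le_trans (Finset.card_insert_le _ _) ?_
              simp
            calc (T.filter fun p => z ∈ (R.P p.1 p.2).toFinset).card • g z
                = ((T.filter fun p => z ∈ (R.P p.1 p.2).toFinset).card : ℝ≥0∞) * g z := by
                  rw [nsmul_eq_mul]
              _ ≤ 2 * g z := mul_le_mul_left (by exact_mod_cast hcard) _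
          · rw [Finset.not_nonempty_iff_eq_empty.mp hne]
            simp
      _ = 2 * ∑ z ∈ Z, g z := by rw [Finset.mul_sum]
      _ ≤ 2 * gArea m' := by
          rw [← hgA]
          exact mul_le_mul_right (ENNReal.sum_le_tsum Z) _
  -- area comparison
  have hι : ∑' v, (m' (R.ι v) : ℝ≥0∞) ^ 2 ≤ gArea m' :=
    ENNReal.summable.tsum_le_tsum_of_inj R.ι R.inj (fun _ _ => zero_le) (fun _ => le_rfl)
      ENNReal.summable
  have harea : gArea m ≤ ((2 * (b + 1) ^ 2 : ℕ) : ℝ≥0∞) * gArea m' := by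
    have hpt : ∀ v, ((m v : ℝ≥0∞)) ^ 2
        ≤ 2 * (m' (R.ι v) : ℝ≥0∞) ^ 2 + (2 * (b : ℝ≥0∞)) * ((t v : ℝ≥0) : ℝ≥0∞) := by
      intro v
      have hnn : (m v) ^ 2 ≤ 2 * (m' (R.ι v)) ^ 2 + (2 * (b : ℝ≥0)) * t v := by
        simp only [hm]
        calc (m' (R.ι v) + NNReal.sqrt ((b : ℝ≥0) * t v)) ^ 2
            = m' (R.ι v) ^ 2 + (2 * m' (R.ι v) * NNReal.sqrt ((b : ℝ≥0) * t v)
              + NNReal.sqrt ((b : ℝ≥0) * t v) ^ 2) := by ring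
          _ ≤ m' (R.ι v) ^ 2 + ((m' (R.ι v) ^ 2 + NNReal.sqrt ((b : ℝ≥0) * t v) ^ 2)
              + NNReal.sqrt ((b : ℝ≥0) * t v) ^ 2) :=
              add_le_add_right (add_le_add_left (two_mul_le_add_sq _ _) _) _
          _ = 2 * m' (R.ι v) ^ 2 + 2 * NNReal.sqrt ((b : ℝ≥0) * t v) ^ 2 := by ring
          _ = 2 * m' (R.ι v) ^ 2 + (2 * (b : ℝ≥0)) * t v := by
              rw [NNReal.sq_sqrt]; ring
      calc ((m v : ℝ≥0∞)) ^ 2 = (((m v) ^ 2 : ℝ≥0) : ℝ≥0∞) := by rw [ENNReal.coe_pow]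
        _ ≤ ((2 * (m' (R.ι v)) ^ 2 + (2 * (b : ℝ≥0)) * t v : ℝ≥0) : ℝ≥0∞) :=
            ENNReal.coe_le_coe.mpr hnn
        _ = 2 * (m' (R.ι v) : ℝ≥0∞) ^ 2 + (2 * (b : ℝ≥0∞)) * ((t v : ℝ≥0) : ℝ≥0∞) := by
            push_cast; ring
    calc gArea m = ∑' v, ((m v : ℝ≥0∞)) ^ 2 := rfl
      _ ≤ ∑' v, (2 * (m' (R.ι v) : ℝ≥0∞) ^ 2
          + (2 * (b : ℝ≥0∞)) * ((t v : ℝ≥0) : ℝ≥0∞)) := ENNReal.tsum_le_tsum hpt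
      _ = 2 * (∑' v, (m' (R.ι v) : ℝ≥0∞) ^ 2)
          + (2 * (b : ℝ≥0∞)) * ∑' v, ((t v : ℝ≥0) : ℝ≥0∞) := by
          rw [ENNReal.tsum_add, ENNReal.tsum_mul_left, ENNReal.tsum_mul_left]
      _ ≤ 2 * gArea m' + (2 * (b : ℝ≥0∞)) * (2 * gArea m') :=
          add_le_add (mul_le_mul_right hι _) (mul_le_mul_right hT _)
      _ = ((2 + 4 * b : ℕ) : ℝ≥0∞) * gArea m' := by push_cast; ring
      _ ≤ ((2 * (b + 1) ^ 2 : ℕ) : ℝ≥0∞) * gArea m' := by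
          refine mul_le_mul_left ?_ _
          have : (2 + 4 * b : ℕ) ≤ 2 * (b + 1) ^ 2 := by nlinarith
          exact_mod_cast Nat.cast_le.mpr this
  -- family length comparison
  have hfl : famLen m' Γ' ≤ famLen m Γ := by
    simp only [famLen]
    refine le_iInf₂ fun γ hγ => ?_
    exact le_trans (iInf₂_le _ (href γ hγ)) (hlen γ (hΓ γ hγ))
  by_cases hA : gArea m = 0
  · have hm0 : ∀ v, ((m v : ℝ≥0∞)) ^ 2 = 0 := ENNReal.tsum_eq_zero.mp hA
    obtain ⟨γ₀, hγ₀⟩ := hΓne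
    have hpl : pLen m γ₀ = 0 := by
      rw [pLen]
      refine List.sum_eq_zero fun x hx => ?_
      obtain ⟨v, _, rfl⟩ := List.mem_map.mp hx
      have := hm0 v
      simpa using this
    have h0 : famLen m' Γ' = 0 := by
      refine le_antisymm ?_ zero_le
      refine le_trans hfl ?_
      refine le_trans ?_ hpl.le
      exact iInf₂_le γ₀ hγ₀
    rw [h0]
    simp
  · have hAtop : gArea m ≠ ⊤ := by
      refine ne_top_of_le_ne_top ?_ harea
      exact ENNReal.mul_ne_top (ENNReal.natCast_ne_top _) hm'.2.ne
    have hadm : Admissible m := ⟨pos_iff_ne_zero.mpr hA, lt_top_iff_ne_top.mpr hAtop⟩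
    have hEL : famLen m Γ ^ 2 / gArea m ≤ extremalLength Γ :=
      le_iSup₂ (f := fun (m : V → ℝ≥0) (_ : Admissible m) => famLen m Γ ^ 2 / gArea m) m hadm
    have hA'0 : gArea m' ≠ 0 := hm'.1.ne'
    have hA't : gArea m' ≠ ⊤ := hm'.2.ne
    rw [ENNReal.div_le_iff_le_mul (Or.inl hA'0) (Or.inl hA't)]
    calc famLen m' Γ' ^ 2 ≤ famLen m Γ ^ 2 := by gcongr
      _ = famLen m Γ ^ 2 / gArea m * gArea m := (ENNReal.div_mul_cancel hA hAtop).symm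
      _ ≤ famLen m Γ ^ 2 / gArea m * (((2 * (b + 1) ^ 2 : ℕ) : ℝ≥0∞) * gArea m') :=
          mul_le_mul_right harea _
      _ = (((2 * (b + 1) ^ 2 : ℕ) : ℝ≥0∞) * (famLen m Γ ^ 2 / gArea m)) * gArea m' := by
          ring
      _ ≤ (((2 * (b + 1) ^ 2 : ℕ) : ℝ≥0∞) * extremalLength Γ) * gArea m' :=
          mul_le_mul_left (mul_le_mul_right hEL _) _
end

section
/- Let (G, G', ι, P, r) be a b-bounded refinement, let θ : V → [0,∞) be a metric on G with area(θ) = 1, and let t : E → V be an orientation assigning to each edge one of its endpoints (its tail) such that every vertex v ∈ V is the tail of at most d edges. Define μ : V' → [0,∞) by μ(ι(v)) = θ(v) for v ∈ V, μ(z) = θ(t(e)) for z ∈ r(e), and μ(z) = 0 for all other z ∈ V'. Then area(μ) = ∑_{z∈V'} μ(z)² ≤ 1 + d·b. -/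
open scoped ENNReal NNReal

/-- The area estimate for the pulled-back metric: if `θ` has unit area and `μ` is defined
from `θ` using an orientation of outdegree at most `d`, then `area(μ) ≤ 1 + d·b`. -/
theorem stmt_7 {V V' : Type*} (G : SimpleGraph V) (G' : SimpleGraph V')
    (R : Refinement G G') (b : ℕ) (hb : R.IsBBounded b)
    (θ : V → ℝ≥0) (hθ : gArea θ = 1)
    (d : ℕ) (t : Sym2 V → V) (ht : ∀ e ∈ G.edgeSet, t e ∈ e)
    (hout : ∀ v : V, ({e : Sym2 V | e ∈ G.edgeSet ∧ t e = v}).encard ≤ d)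
    (μ : V' → ℝ≥0)
    (hμι : ∀ v, μ (R.ι v) = θ v)
    (hμr : ∀ a c, G.Adj a c → ∀ z ∈ R.P a c, μ z = θ (t s(a, c)))
    (hμ0 : ∀ z : V', z ∉ Set.range R.ι → (∀ a c, G.Adj a c → z ∉ R.P a c) → μ z = 0) :
    gArea μ ≤ ((1 + d * b : ℕ) : ℝ≥0∞) := by
  classical
  set f : V' → ℝ≥0∞ := fun z => (μ z : ℝ≥0∞) ^ 2 with hfdef
  -- interior set of an edge
  set I : Sym2 V → Set V' := fun e => {z | ∃ a c, G.Adj a c ∧ s(a, c) = e ∧ z ∈ R.P a c}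
    with hIdef
  -- support of f is contained in range ι ∪ interiors
  have hsupp : Function.support f ⊆ Set.range R.ι ∪ ⋃ e ∈ G.edgeSet, I e := by
    intro z hz
    by_contra hcon
    have h1 : z ∉ Set.range R.ι := fun h => hcon (Or.inl h)
    have h2 : z ∉ ⋃ e ∈ G.edgeSet, I e := fun h => hcon (Or.inr h)
    have h3 : ∀ a c, G.Adj a c → z ∉ R.P a c := by
      intro a c hac hzP
      have : z ∈ ⋃ e ∈ G.edgeSet, I e := by
        refine Set.mem_biUnion (G.mem_edgeSet.mpr hac) ?_
        exact ⟨a, c, hac, rfl, hzP⟩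
      exact h2 this
    have := hμ0 z h1 h3
    simp [hfdef, this] at hz
  have key : gArea μ = ∑' z : ↥(Set.range R.ι ∪ ⋃ e ∈ G.edgeSet, I e), f z :=
    (tsum_subtype_eq_of_support_subset hsupp).symm
  -- the sum over the range of ι is 1
  have hrange : ∑' z : ↥(Set.range R.ι), f z = 1 := by
    rw [tsum_range f R.inj]
    simpa [hfdef, hμι, gArea] using hθ
  -- the sum over one interior
  have hint : ∀ e : G.edgeSet, ∑' z : ↥(I e.1), f z ≤ (b : ℝ≥0∞) * (θ (t e.1) : ℝ≥0∞) ^ 2 := by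
    rintro ⟨e, he⟩
    induction e using Sym2.ind with
    | _ a c =>
    have hac : G.Adj a c := G.mem_edgeSet.mp he
    -- the interior set of s(a,c) is the toFinset of P a c
    have hsub : I s(a, c) ⊆ ↑(R.P a c).toFinset := by
      rintro z ⟨a', c', hadj', heq, hz⟩
      rw [Sym2.eq_iff] at heq
      rcases heq with ⟨h1, h2⟩ | ⟨h1, h2⟩
      · rw [Finset.mem_coe, List.mem_toFinset, ← h1, ← h2]; exact hz
      · rw [Finset.mem_coe, List.mem_toFinset, ← h2, ← h1, R.symm a' c' hadj', List.mem_reverse]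
        exact hz
    calc ∑' z : ↥(I s(a, c)), f z
        ≤ ∑' z : ↑((R.P a c).toFinset : Set V'), f z :=
          ENNReal.tsum_mono_subtype f hsub
      _ = ∑ z ∈ (R.P a c).toFinset, f z := Finset.tsum_subtype _ f
      _ ≤ ∑ _z ∈ (R.P a c).toFinset, (θ (t s(a, c)) : ℝ≥0∞) ^ 2 := by
          apply Finset.sum_le_sum
          intro z hz
          rw [List.mem_toFinset] at hz
          simp [hfdef, hμr a c hac z hz]
      _ = ((R.P a c).toFinset.card : ℝ≥0∞) * (θ (t s(a, c)) : ℝ≥0∞) ^ 2 := by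
          rw [Finset.sum_const, nsmul_eq_mul]
      _ ≤ (b : ℝ≥0∞) * (θ (t s(a, c)) : ℝ≥0∞) ^ 2 := by
          apply mul_le_mul_left
          exact_mod_cast ((R.P a c).toFinset_card_le).trans (hb a c hac)
  -- the sum over the edges, fiberwise
  have hedge : ∑' e : G.edgeSet, (θ (t e.1) : ℝ≥0∞) ^ 2 ≤ (d : ℝ≥0∞) := by
    set τ : G.edgeSet → V := fun e => t e.1 with hτdef
    rw [← ENNReal.tsum_fiberwise (fun e : G.edgeSet => (θ (t e.1) : ℝ≥0∞) ^ 2) τ]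
    have hfib : ∀ v : V, ∑' e : ↥(τ ⁻¹' {v}), (θ (t e.1.1) : ℝ≥0∞) ^ 2
        ≤ (d : ℝ≥0∞) * (θ v : ℝ≥0∞) ^ 2 := by
      intro v
      have hcard : (τ ⁻¹' {v}).encard ≤ d := by
        have himg : Subtype.val '' (τ ⁻¹' {v}) ⊆ {e : Sym2 V | e ∈ G.edgeSet ∧ t e = v} := by
          rintro e ⟨⟨e', he'⟩, hmem, rfl⟩
          exact ⟨he', hmem⟩
        calc (τ ⁻¹' {v}).encard = (Subtype.val '' (τ ⁻¹' {v})).encard :=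
              (Subtype.val_injective.encard_image _).symm
          _ ≤ ({e : Sym2 V | e ∈ G.edgeSet ∧ t e = v}).encard := Set.encard_mono himg
          _ ≤ d := hout v
      have hfin : (τ ⁻¹' {v}).Finite := Set.finite_of_encard_le_coe hcard
      have : ∑' e : ↥(τ ⁻¹' {v}), (θ (t e.1.1) : ℝ≥0∞) ^ 2
          = ∑' _e : ↥(τ ⁻¹' {v}), (θ v : ℝ≥0∞) ^ 2 := by
        apply tsum_congr
        rintro ⟨e, he⟩
        have : t e.1 = v := he
        rw [this]
      rw [this]
      haveI := hfin.fintype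
      rw [tsum_fintype]
      rw [Finset.sum_const, nsmul_eq_mul]
      apply mul_le_mul_left
      have h1 : (τ ⁻¹' {v}).encard = (Fintype.card ↥(τ ⁻¹' {v}) : ℕ∞) := by
        rw [Set.encard_eq_coe_toFinset_card, Set.toFinset_card]
      rw [h1] at hcard
      exact_mod_cast hcard
    calc ∑' v, ∑' e : ↥(τ ⁻¹' {v}), (θ (t e.1.1) : ℝ≥0∞) ^ 2
        ≤ ∑' v, (d : ℝ≥0∞) * (θ v : ℝ≥0∞) ^ 2 := ENNReal.tsum_le_tsum hfib
      _ = (d : ℝ≥0∞) * ∑' v, (θ v : ℝ≥0∞) ^ 2 := ENNReal.tsum_mul_left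
      _ = (d : ℝ≥0∞) := by rw [show ∑' v, (θ v : ℝ≥0∞) ^ 2 = gArea θ from rfl, hθ, mul_one]
  -- put everything together
  calc gArea μ = ∑' z : ↥(Set.range R.ι ∪ ⋃ e ∈ G.edgeSet, I e), f z := key
    _ ≤ ∑' z : ↥(Set.range R.ι), f z + ∑' z : ↥(⋃ e ∈ G.edgeSet, I e), f z :=
        ENNReal.tsum_union_le f _ _
    _ ≤ 1 + ∑' e : G.edgeSet, ∑' z : ↥(I e.1), f z := by
        rw [hrange]
        exact add_le_add_right (ENNReal.tsum_biUnion_le_tsum f G.edgeSet I) 1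
    _ ≤ 1 + ∑' e : G.edgeSet, (b : ℝ≥0∞) * (θ (t e.1) : ℝ≥0∞) ^ 2 :=
        add_le_add_right (ENNReal.tsum_le_tsum hint) 1
    _ = 1 + (b : ℝ≥0∞) * ∑' e : G.edgeSet, (θ (t e.1) : ℝ≥0∞) ^ 2 := by
        rw [ENNReal.tsum_mul_left]
    _ ≤ 1 + (b : ℝ≥0∞) * (d : ℝ≥0∞) := add_le_add_right (mul_le_mul_right hedge _) 1
    _ = ((1 + d * b : ℕ) : ℝ≥0∞) := by
        have : ((1 + d * b : ℕ) : ℝ≥0∞) = 1 + (b : ℝ≥0∞) * (d : ℝ≥0∞) := by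
          push_cast
          ring
        rw [this]
end

section
/- Let (G, G', ι, P, r) be a b-bounded refinement, let Γ be a nonempty family of paths in G, Γ' a nonempty family of paths in G', and let t : E → V be an orientation of G in which every vertex has outdegree at most d. For a metric θ on G, let μ_θ denote the metric on G' defined by μ_θ(ι(v)) = θ(v), μ_θ(z) = θ(t(e)) for z ∈ r(e), and μ_θ = 0 elsewhere. Suppose that for every admissible metric θ on G and every path γ' ∈ Γ' there exists a path γ ∈ Γ with L_θ(γ) ≤ L_{μ_θ}(γ'). Then EL(Γ) ≤ (1 + d·b)·EL(Γ'). -/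
open scoped ENNReal NNReal

/-- Auxiliary: a constant `tsum` over a set of `encard ≤ n` is at most `n * c`. -/
lemma aux_tsum_const_le {α : Type*} (s : Set α) (c : ℝ≥0∞) (n : ℕ) (h : s.encard ≤ n) :
    ∑' _ : s, c ≤ n * c := by
  obtain ⟨hfin, hcard⟩ := Set.encard_le_coe_iff_finite_ncard_le.mp h
  haveI := hfin.fintype
  rw [tsum_fintype, Finset.sum_const, nsmul_eq_mul]
  have hc : (Fintype.card s : ℝ≥0∞) ≤ n := by
    have : Fintype.card s = s.ncard := by
      rw [← Nat.card_coe_set_eq, Nat.card_eq_fintype_card]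
    rw [this]
    exact_mod_cast hcard
  simpa using mul_le_mul_left hc c

/-- Auxiliary: a `tsum` pushed along a map with fibers of size at most `n`. -/
lemma aux_tsum_fiber {α β : Type*} (f : α → β) (g : β → ℝ≥0∞) (n : ℕ)
    (h : ∀ v, (f ⁻¹' {v}).encard ≤ n) :
    ∑' a, g (f a) ≤ n * ∑' v, g v := by
  calc ∑' a, g (f a)
      = ∑' (p : Σ v, {x // f x = v}), g (f p.2.1) :=
        ((Equiv.sigmaFiberEquiv f).tsum_eq fun a => g (f a)).symm
    _ = ∑' v, ∑' (x : {x // f x = v}), g (f x.1) := ENNReal.tsum_sigma' _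
    _ = ∑' v, ∑' (_ : {x // f x = v}), g v := by
        refine tsum_congr fun v => tsum_congr fun x => by rw [x.2]
    _ ≤ ∑' v, (n : ℝ≥0∞) * g v := by
        refine ENNReal.tsum_le_tsum fun v => ?_
        exact aux_tsum_const_le {x | f x = v} (g v) n (by simpa [Set.preimage] using h v)
    _ = n * ∑' v, g v := ENNReal.tsum_mul_left

/-- Second half of the main theorem: if every path of `Γ'` has a shadow in `Γ` of no
greater length with respect to the metric pulled back along a `d`-bounded-outdegree
orientation, then `EL(Γ) ≤ (1 + d·b)·EL(Γ')`. -/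
theorem stmt_8 {V V' : Type*} (G : SimpleGraph V) (G' : SimpleGraph V')
    (R : Refinement G G') (b : ℕ) (hb : R.IsBBounded b)
    (Γ : Set (List V)) (Γ' : Set (List V'))
    (hΓne : Γ.Nonempty) (hΓ'ne : Γ'.Nonempty)
    (hΓ : ∀ γ ∈ Γ, IsPath G γ) (hΓ' : ∀ γ ∈ Γ', IsPath G' γ)
    (d : ℕ) (t : Sym2 V → V) (ht : ∀ e ∈ G.edgeSet, t e ∈ e)
    (hout : ∀ v : V, ({e : Sym2 V | e ∈ G.edgeSet ∧ t e = v}).encard ≤ d)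
    (hshadow : ∀ θ : V → ℝ≥0, Admissible θ → ∀ μ : V' → ℝ≥0,
      (∀ v, μ (R.ι v) = θ v) →
      (∀ a c, G.Adj a c → ∀ z ∈ R.P a c, μ z = θ (t s(a, c))) →
      (∀ z : V', z ∉ Set.range R.ι → (∀ a c, G.Adj a c → z ∉ R.P a c) → μ z = 0) →
      ∀ γ' ∈ Γ', ∃ γ ∈ Γ, pLen θ γ ≤ pLen μ γ') :
    extremalLength Γ ≤ ((1 + d * b : ℕ) : ℝ≥0∞) * extremalLength Γ' := by
  classical
  set c : ℝ≥0∞ := ((1 + d * b : ℕ) : ℝ≥0∞) with hc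
  have hc0 : c ≠ 0 := by simp [hc]
  have hctop : c ≠ ⊤ := by rw [hc]; exact ENNReal.natCast_ne_top _
  rw [extremalLength]
  refine iSup₂_le fun θ hθ => ?_
  -- the pulled-back metric
  let ν : V' → ℝ≥0 := fun z =>
    if h : ∃ p : V × V, G.Adj p.1 p.2 ∧ z ∈ R.P p.1 p.2 then θ (t s(h.choose.1, h.choose.2))
    else 0
  let μ : V' → ℝ≥0 := fun z => if h : ∃ v, R.ι v = z then θ h.choose else ν z
  have hν : ∀ z a c', G.Adj a c' → z ∈ R.P a c' → ν z = θ (t s(a, c')) := by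
    intro z a c' hac hz
    have hex : ∃ p : V × V, G.Adj p.1 p.2 ∧ z ∈ R.P p.1 p.2 := ⟨(a, c'), hac, hz⟩
    have h1 := hex.choose_spec.1
    have h2 := hex.choose_spec.2
    have hs : s(hex.choose.1, hex.choose.2) = s(a, c') := by
      by_contra hne
      exact R.disj_edges _ _ _ _ h1 hac hne _ h2 hz
    simp only [ν, dif_pos hex, hs]
  have hμι : ∀ v, μ (R.ι v) = θ v := by
    intro v
    have hex : ∃ w, R.ι w = R.ι v := ⟨v, rfl⟩
    simp only [μ, dif_pos hex]
    exact congrArg θ (R.inj hex.choose_spec)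
  have hμP : ∀ a c', G.Adj a c' → ∀ z ∈ R.P a c', μ z = θ (t s(a, c')) := by
    intro a c' hac z hz
    have hnr : ¬ ∃ v, R.ι v = z := by
      rintro ⟨v, rfl⟩
      exact R.disj_range a c' hac _ hz ⟨v, rfl⟩
    simp only [μ, dif_neg hnr]
    exact hν z a c' hac hz
  have hμB : ∀ z, z ∉ Set.range R.ι → μ z = ν z := by
    intro z h1
    have hnr : ¬ ∃ v, R.ι v = z := by simpa [Set.mem_range] using h1
    simp only [μ, dif_neg hnr]
  have hμ0 : ∀ z, z ∉ Set.range R.ι → (∀ a c', G.Adj a c' → z ∉ R.P a c') → μ z = 0 := by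
    intro z h1 h2
    have hnp : ¬ ∃ p : V × V, G.Adj p.1 p.2 ∧ z ∈ R.P p.1 p.2 := by
      rintro ⟨p, hadj, hz⟩
      exact h2 p.1 p.2 hadj hz
    rw [hμB z h1]
    simp only [ν, dif_neg hnp]
  -- length comparison
  have hlen : famLen θ Γ ≤ famLen μ Γ' := by
    refine le_iInf₂ fun γ' hγ' => ?_
    obtain ⟨γ, hγ, hle⟩ := hshadow θ hθ μ hμι hμP hμ0 γ' hγ'
    exact le_trans (iInf₂_le γ hγ) hle
  -- area of μ over the range of ι
  have hrange : ∑' v, ((θ v : ℝ≥0∞)) ^ 2 ≤ gArea μ := by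
    have h1 : ∑' v, ((θ v : ℝ≥0∞)) ^ 2 = ∑' v, ((μ (R.ι v) : ℝ≥0∞)) ^ 2 :=
      tsum_congr fun v => by rw [hμι v]
    rw [h1]
    exact ENNReal.tsum_comp_le_tsum_of_injective R.inj fun z => ((μ z : ℝ≥0∞)) ^ 2
  have hθμ : gArea θ ≤ gArea μ := hrange
  -- area bound: split into range part and attached part
  let AA : V' → ℝ≥0∞ := fun z => if h : ∃ v, R.ι v = z then ((θ h.choose : ℝ≥0∞)) ^ 2 else 0
  have hAA : ∑' z, AA z = gArea θ := by
    have hsupp : Function.support AA ⊆ Set.range R.ι := by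
      intro z hz
      by_contra hnr
      have : ¬ ∃ v, R.ι v = z := by simpa [Set.mem_range] using hnr
      exact hz (by simp only [AA, dif_neg this])
    have h1 : ∑' v, AA (R.ι v) = ∑' z, AA z := Function.Injective.tsum_eq R.inj hsupp
    rw [← h1]
    refine tsum_congr fun v => ?_
    have hex : ∃ w, R.ι w = R.ι v := ⟨v, rfl⟩
    simp only [AA, dif_pos hex]
    rw [R.inj hex.choose_spec]
  -- attached part
  have hνbound : ∑' z, ((ν z : ℝ≥0∞)) ^ 2 ≤ ((d * b : ℕ) : ℝ≥0∞) * gArea θ := by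
    -- support of ν is covered by the attached sets of the edges
    have hsupp : Function.support (fun z => ((ν z : ℝ≥0∞)) ^ 2) ⊆
        ⋃ (e : G.edgeSet), {z : V' | z ∈ R.P (t e) (Sym2.Mem.other (ht e e.2))} := by
      intro z hz
      have hex : ∃ p : V × V, G.Adj p.1 p.2 ∧ z ∈ R.P p.1 p.2 := by
        by_contra hnp
        exact hz (by simp only [ν, dif_neg hnp]; simp)
      obtain ⟨⟨a, c'⟩, hac, hzP⟩ := hex
      have hmem : s(a, c') ∈ G.edgeSet := hac
      refine Set.mem_iUnion.mpr ⟨⟨s(a, c'), hmem⟩, ?_⟩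
      have hspec : s(t s(a, c'), Sym2.Mem.other (ht s(a, c') hmem)) = s(a, c') :=
        Sym2.other_spec _
    -- the ordered pair (t e, other) is (a,c') or (c',a)
      rcases Sym2.eq_iff.mp hspec with ⟨h1, h2⟩ | ⟨h1, h2⟩
      · show z ∈ R.P (t s(a, c')) (Sym2.Mem.other (ht s(a, c') hmem))
        rw [h2, h1]
        exact hzP
      · show z ∈ R.P (t s(a, c')) (Sym2.Mem.other (ht s(a, c') hmem))
        rw [h2, h1, R.symm a c' hac, List.mem_reverse]
        exact hzP
    calc ∑' z, ((ν z : ℝ≥0∞)) ^ 2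
        = ∑' z : (⋃ (e : G.edgeSet),
            {z : V' | z ∈ R.P (t e) (Sym2.Mem.other (ht e e.2))}),
            ((ν z : ℝ≥0∞)) ^ 2 := (tsum_subtype_eq_of_support_subset hsupp).symm
      _ ≤ ∑' (e : G.edgeSet), ∑' (z : {z : V' | z ∈ R.P (t e) (Sym2.Mem.other (ht e e.2))}),
            ((ν z : ℝ≥0∞)) ^ 2 :=
          ENNReal.tsum_iUnion_le_tsum (fun z => ((ν z : ℝ≥0∞)) ^ 2)
            (fun e : G.edgeSet => {z : V' | z ∈ R.P (t e) (Sym2.Mem.other (ht e e.2))})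
      _ ≤ ∑' (e : G.edgeSet), (b : ℝ≥0∞) * ((θ (t e) : ℝ≥0∞)) ^ 2 := by
          refine ENNReal.tsum_le_tsum fun e => ?_
          have hadj : G.Adj (t e) (Sym2.Mem.other (ht e e.2)) := by
            have hspec : s(t (e : Sym2 V), Sym2.Mem.other (ht e e.2)) = (e : Sym2 V) :=
              Sym2.other_spec _
            have : s(t (e : Sym2 V), Sym2.Mem.other (ht e e.2)) ∈ G.edgeSet := by
              rw [hspec]; exact e.2
            exact (SimpleGraph.mem_edgeSet G).mp this
          have hval : ∀ z : {z : V' | z ∈ R.P (t e) (Sym2.Mem.other (ht e e.2))},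
              ((ν (z : V') : ℝ≥0∞)) ^ 2 = ((θ (t e) : ℝ≥0∞)) ^ 2 := by
            intro z
            have := hν (z : V') _ _ hadj z.2
            rw [this]
            congr 2
            rw [Sym2.other_spec]
          calc ∑' (z : {z : V' | z ∈ R.P (t e) (Sym2.Mem.other (ht e e.2))}),
                ((ν (z : V') : ℝ≥0∞)) ^ 2
              = ∑' (_ : {z : V' | z ∈ R.P (t e) (Sym2.Mem.other (ht e e.2))}),
                ((θ (t e) : ℝ≥0∞)) ^ 2 := tsum_congr hval
            _ ≤ (b : ℝ≥0∞) * ((θ (t e) : ℝ≥0∞)) ^ 2 := by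
                refine aux_tsum_const_le _ _ b ?_
                have hfin : {z : V' | z ∈ R.P (t e) (Sym2.Mem.other (ht e e.2))} =
                    ((R.P (t e) (Sym2.Mem.other (ht e e.2))).toFinset : Set V') := by
                  ext z; simp
                rw [hfin, Set.encard_coe_eq_coe_finsetCard]
                have := (List.toFinset_card_le (R.P (t e) (Sym2.Mem.other (ht e e.2)))).trans
                  (hb _ _ hadj)
                exact_mod_cast this
      _ = (b : ℝ≥0∞) * ∑' (e : G.edgeSet), ((θ (t e) : ℝ≥0∞)) ^ 2 := ENNReal.tsum_mul_left
      _ ≤ (b : ℝ≥0∞) * ((d : ℝ≥0∞) * gArea θ) := by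
          refine mul_le_mul_right ?_ _
          refine aux_tsum_fiber (fun e : G.edgeSet => t e) (fun v => ((θ v : ℝ≥0∞)) ^ 2) d ?_
          intro v
          have himg : (fun e : G.edgeSet => t e) ⁻¹' {v} =
              Subtype.val ⁻¹' {e : Sym2 V | e ∈ G.edgeSet ∧ t e = v} := by
            ext e; simp [e.2]
          calc ((fun e : G.edgeSet => t e) ⁻¹' {v}).encard
              ≤ ({e : Sym2 V | e ∈ G.edgeSet ∧ t e = v}).encard := by
                rw [himg]
                have := Set.InjOn.encard_image
                  (f := (Subtype.val : G.edgeSet → Sym2 V))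
                  (s := Subtype.val ⁻¹' {e : Sym2 V | e ∈ G.edgeSet ∧ t e = v})
                  (Subtype.val_injective.injOn)
                rw [← this]
                exact Set.encard_mono (Set.image_preimage_subset _ _)
            _ ≤ d := hout v
      _ = ((d * b : ℕ) : ℝ≥0∞) * gArea θ := by
          rw [← mul_assoc, Nat.cast_mul, mul_comm (b : ℝ≥0∞)]
  -- full area bound
  have harea : gArea μ ≤ c * gArea θ := by
    have hpt : ∀ z, ((μ z : ℝ≥0∞)) ^ 2 ≤ AA z + ((ν z : ℝ≥0∞)) ^ 2 := by
      intro z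
      by_cases h : ∃ v, R.ι v = z
      · have : μ z = θ h.choose := by simp only [μ, dif_pos h]
        rw [this]
        simp only [AA, dif_pos h]
        exact le_self_add
      · have h1 : μ z = ν z := by simp only [μ, dif_neg h]
        simp only [AA, dif_neg h, h1, zero_add, le_refl]
    calc gArea μ ≤ ∑' z, (AA z + ((ν z : ℝ≥0∞)) ^ 2) := ENNReal.tsum_le_tsum hpt
      _ = ∑' z, AA z + ∑' z, ((ν z : ℝ≥0∞)) ^ 2 := ENNReal.tsum_add
      _ ≤ gArea θ + ((d * b : ℕ) : ℝ≥0∞) * gArea θ := by rw [hAA]; exact add_le_add_right hνbound _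
      _ = c * gArea θ := by rw [hc, Nat.cast_add, Nat.cast_one, add_mul, one_mul]
  have hadm : Admissible μ :=
    ⟨lt_of_lt_of_le hθ.1 hθμ,
     lt_of_le_of_lt harea (ENNReal.mul_lt_top (hc ▸ ENNReal.natCast_lt_top _) hθ.2)⟩
  -- final computation
  calc famLen θ Γ ^ 2 / gArea θ
      ≤ famLen μ Γ' ^ 2 / gArea θ := by gcongr
    _ = c * famLen μ Γ' ^ 2 / (c * gArea θ) := (ENNReal.mul_div_mul_left _ _ hc0 hctop).symm
    _ ≤ c * famLen μ Γ' ^ 2 / gArea μ := ENNReal.div_le_div_left harea _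
    _ = c * (famLen μ Γ' ^ 2 / gArea μ) := by rw [mul_div_assoc]
    _ ≤ c * extremalLength Γ' := by
        refine mul_le_mul_right ?_ c
        exact le_iSup₂ (f := fun (m : V' → ℝ≥0) (_ : Admissible m) => famLen m Γ' ^ 2 / gArea m)
          μ hadm
end
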